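/- For the linear extrapolated LASSO solution β_{(M,s)}(y') = (X_M^⊤X_M)^{−1}(X_M^⊤y' − λs) and any r > 0, the maximum of |X_j^⊤(y' − X_M β_{(M,s)}(y'))| over y' with ‖X^⊤(y'−y)‖_∞ ≤ r equals |X_j^⊤(y − X_M β_{(M,s)}(y))| + r(1 + ‖X_j^⊤ X_M (X_M^⊤X_M)^{−1}‖₁), for any j ∉ M. -/

import Mathlib

open Matrix Set

/-- Submatrix of columns of `X` indexed by a model `M`. -/
def colSub {n d : ℕ} (X : Matrix (Fin n) (Fin d) ℝ) (M : Finset (Fin d)) :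
    Matrix (Fin n) {j // j ∈ M} ℝ := fun i j => X i j.val

/-- Linearly extrapolated LASSO solution
`β_{(M,s)}(y) = (X_Mᵀ X_M)⁻¹ (X_Mᵀ y − λ s)`. -/
noncomputable def betaMS {n d : ℕ} (X : Matrix (Fin n) (Fin d) ℝ) (lam : ℝ)
    (M : Finset (Fin d)) (s : {j // j ∈ M} → ℝ) (y : Fin n → ℝ) : {j // j ∈ M} → ℝ :=
  ((colSub X M)ᵀ * colSub X M)⁻¹ *ᵥ ((colSub X M)ᵀ *ᵥ y - lam • s)

/-- The maximum of `|X_jᵀ (y' − X_M β_{(M,s)}(y'))|` over the ℓ∞-ball of radius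
r in sufficient-statistic space equals its value at y plus
`r (1 + ‖X_jᵀ X_M (X_Mᵀ X_M)⁻¹‖₁)`. -/
theorem lasso_perturbation_max
    {n d : ℕ} (X : Matrix (Fin n) (Fin d) ℝ) (lam : ℝ)
    (M : Finset (Fin d)) (s : {j // j ∈ M} → ℝ)
    (hrank : IsUnit ((colSub X M)ᵀ * colSub X M).det)
    (hsurj : Function.Surjective (fun v : Fin n → ℝ => Xᵀ *ᵥ v))
    (y : Fin n → ℝ) (r : ℝ) (hr : 0 < r) (j : Fin d) (hj : j ∉ M) :
    IsGreatest
      {t : ℝ | ∃ y' : Fin n → ℝ, ‖Xᵀ *ᵥ (y' - y)‖ ≤ r ∧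
        t = |(fun i => X i j) ⬝ᵥ (y' - colSub X M *ᵥ betaMS X lam M s y')|}
      (|(fun i => X i j) ⬝ᵥ (y - colSub X M *ᵥ betaMS X lam M s y)| +
        r * (1 + ∑ i : {j // j ∈ M},
          |vecMul (fun i' => X i' j)
            (colSub X M * ((colSub X M)ᵀ * colSub X M)⁻¹) i|)) := by
  classical
  set c := (fun i => X i j) ⬝ᵥ (y - colSub X M *ᵥ betaMS X lam M s y) with hc
  set w := vecMul (fun i' => X i' j)
      (colSub X M * ((colSub X M)ᵀ * colSub X M)⁻¹) with hw
  have key : ∀ y' : Fin n → ℝ,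
      (fun i => X i j) ⬝ᵥ (y' - colSub X M *ᵥ betaMS X lam M s y')
        = c + ((Xᵀ *ᵥ (y' - y)) j
            - ∑ i : {j // j ∈ M}, w i * (Xᵀ *ᵥ (y' - y)) i.val) := by
    intro y'
    have hβ : betaMS X lam M s y' - betaMS X lam M s y
        = ((colSub X M)ᵀ * colSub X M)⁻¹ *ᵥ ((colSub X M)ᵀ *ᵥ (y' - y)) := by
      rw [betaMS, betaMS, ← Matrix.mulVec_sub, sub_sub_sub_cancel_right,
        ← Matrix.mulVec_sub]
    have h1 : y' - colSub X M *ᵥ betaMS X lam M s y'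
        = (y - colSub X M *ᵥ betaMS X lam M s y)
          + ((y' - y) - colSub X M *ᵥ (((colSub X M)ᵀ * colSub X M)⁻¹ *ᵥ
              ((colSub X M)ᵀ *ᵥ (y' - y)))) := by
      rw [← hβ, Matrix.mulVec_sub]
      abel
    rw [h1, dotProduct_add, ← hc]
    congr 1
    rw [dotProduct_sub, Matrix.dotProduct_mulVec, Matrix.dotProduct_mulVec,
      Matrix.vecMul_vecMul]
    rfl
  have hsum_nonneg : (0:ℝ) ≤ ∑ i : {j // j ∈ M}, |w i| :=
    Finset.sum_nonneg fun i _ => abs_nonneg _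
  constructor
  · -- membership: construct the maximizer
    set ε : ℝ := if 0 ≤ c then 1 else -1 with hε
    set σ : ℝ → ℝ := fun x => if 0 ≤ x then 1 else -1 with hσ
    set z : Fin d → ℝ := fun k =>
      if k = j then ε * r else
        if h : k ∈ M then -(ε * r) * σ (w ⟨k, h⟩) else 0 with hzdef
    obtain ⟨v, hv⟩ := hsurj z
    have habsε : |ε| = 1 := by
      rw [hε]; split_ifs with h <;> simp
    have habsσ : ∀ x : ℝ, |σ x| = 1 := by
      intro x; rw [hσ]; dsimp only; split_ifs with h <;> simp
    have hσmul : ∀ x : ℝ, σ x * x = |x| := by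
      intro x; rw [hσ]; dsimp only; split_ifs with h
      · rw [one_mul, abs_of_nonneg h]
      · rw [neg_one_mul, abs_of_neg (lt_of_not_ge h)]
    refine ⟨y + v, ?_, ?_⟩
    · have : Xᵀ *ᵥ (y + v - y) = z := by rw [add_sub_cancel_left]; exact hv
      rw [this, pi_norm_le_iff_of_nonneg hr.le]
      intro k
      rw [Real.norm_eq_abs, hzdef]
      dsimp only
      split_ifs with h1 h2
      · rw [abs_mul, habsε, one_mul, abs_of_pos hr]
      · rw [abs_mul, abs_neg, abs_mul, habsε, habsσ, mul_one, one_mul,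
          abs_of_pos hr]
      · simpa using hr.le
    · rw [key]
      have hz : Xᵀ *ᵥ (y + v - y) = z := by rw [add_sub_cancel_left]; exact hv
      rw [hz]
      have hzj : z j = ε * r := by rw [hzdef]; simp
      have hzi : ∀ i : {j // j ∈ M}, z i.val = -(ε * r) * σ (w i) := by
        intro i
        rw [hzdef]
        dsimp only
        rw [if_neg (by intro h; subst h; exact hj i.2), dif_pos i.2]
      have hsum : ∑ i : {j // j ∈ M}, w i * z i.val
          = -(ε * r) * ∑ i : {j // j ∈ M}, |w i| := by
        rw [Finset.mul_sum]
        refine Finset.sum_congr rfl fun i _ => ?_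
        rw [hzi i, ← hσmul (w i)]; ring
      rw [hzj, hsum]
      have hval : c + (ε * r - -(ε * r) * ∑ i : {j // j ∈ M}, |w i|)
          = c + ε * (r * (1 + ∑ i : {j // j ∈ M}, |w i|)) := by ring
      rw [hval]
      have hT : 0 < r * (1 + ∑ i : {j // j ∈ M}, |w i|) := by
        apply mul_pos hr; linarith
      rw [hε]
      split_ifs with h
      · rw [one_mul, abs_of_nonneg h]
        exact (abs_of_nonneg (by linarith)).symm
      · rw [neg_one_mul, ← sub_eq_add_neg, abs_of_neg (lt_of_not_ge h)]
        have hc0 : c < 0 := lt_of_not_ge h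
        rw [abs_of_neg (by linarith)]
        ring
  · -- upper bound
    rintro t ⟨y', hnorm, rfl⟩
    rw [key]
    have hzk : ∀ k, |(Xᵀ *ᵥ (y' - y)) k| ≤ r := by
      intro k
      calc |(Xᵀ *ᵥ (y' - y)) k| = ‖(Xᵀ *ᵥ (y' - y)) k‖ := rfl
        _ ≤ ‖Xᵀ *ᵥ (y' - y)‖ := norm_le_pi_norm _ k
        _ ≤ r := hnorm
    have hS : |∑ i : {j // j ∈ M}, w i * (Xᵀ *ᵥ (y' - y)) i.val|
        ≤ (∑ i : {j // j ∈ M}, |w i|) * r := by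
      calc |∑ i : {j // j ∈ M}, w i * (Xᵀ *ᵥ (y' - y)) i.val|
          ≤ ∑ i : {j // j ∈ M}, |w i * (Xᵀ *ᵥ (y' - y)) i.val| :=
            Finset.abs_sum_le_sum_abs _ _
        _ ≤ ∑ i : {j // j ∈ M}, |w i| * r := by
            refine Finset.sum_le_sum fun i _ => ?_
            rw [abs_mul]
            exact mul_le_mul_of_nonneg_left (hzk _) (abs_nonneg _)
        _ = (∑ i : {j // j ∈ M}, |w i|) * r := by rw [← Finset.sum_mul]
    calc |c + ((Xᵀ *ᵥ (y' - y)) j - ∑ i : {j // j ∈ M}, w i * (Xᵀ *ᵥ (y' - y)) i.val)|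
        ≤ |c| + |(Xᵀ *ᵥ (y' - y)) j - ∑ i : {j // j ∈ M}, w i * (Xᵀ *ᵥ (y' - y)) i.val| :=
          abs_add_le _ _
      _ ≤ |c| + (|(Xᵀ *ᵥ (y' - y)) j| + |∑ i : {j // j ∈ M}, w i * (Xᵀ *ᵥ (y' - y)) i.val|) :=
          add_le_add (le_refl _) (abs_sub _ _)
      _ ≤ |c| + (r + (∑ i : {j // j ∈ M}, |w i|) * r) := by
          have := hzk j
          have := hS
          gcongr <;> assumption
      _ = |c| + r * (1 + ∑ i : {j // j ∈ M}, |w i|) := by ring
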